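/- The free Heyting algebra on one generator (the Rieger–Nishimura lattice) contains, besides ⊥ and ⊤, exactly the elements φᵢ and ψᵢ defined by φ₁ = ¬x, ψ₁ = x, φ_{i+1} = φᵢ → ψᵢ, ψ_{i+1} = φᵢ ∨ ψᵢ; that is, every propositional formula in one variable x is intuitionistically equivalent to exactly one formula among ⊥, ⊤, the φᵢ, and the ψᵢ. -/

import Mathlib

/-- Propositional formulas with atoms in `α`. -/
inductive PropForm (α : Type) : Type
  | var : α → PropForm α
  | bot : PropForm α
  | conj : PropForm α → PropForm α → PropForm α
  | disj : PropForm α → PropForm α → PropForm α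
  | impl : PropForm α → PropForm α → PropForm α
  deriving DecidableEq

/-- Kripke forcing over a preordered set of worlds `W` with atomic valuation
`val` (standard clauses for intuitionistic propositional logic). -/
def Force {W α : Type} [Preorder W] (val : W → α → Prop) :
    W → PropForm α → Prop
  | w, .var a => val w a
  | _, .bot => False
  | w, .conj p q => Force val w p ∧ Force val w q
  | w, .disj p q => Force val w p ∨ Force val w q
  | w, .impl p q => ∀ w', w ≤ w' → Force val w' p → Force val w' q

/-- The atomic valuation is monotone. -/
def MonoVal {W α : Type} [Preorder W] (val : W → α → Prop) : Prop :=
  ∀ a : α, ∀ w w' : W, w ≤ w' → val w a → val w' a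

/-- The set of subformulas of a formula. -/
def Subform {α : Type} [DecidableEq α] : PropForm α → Finset (PropForm α)
  | .var a => {PropForm.var a}
  | .bot => {PropForm.bot}
  | .conj p q => insert (PropForm.conj p q) (Subform p ∪ Subform q)
  | .disj p q => insert (PropForm.disj p q) (Subform p ∪ Subform q)
  | .impl p q => insert (PropForm.impl p q) (Subform p ∪ Subform q)

/-- Intuitionistic equivalence of one-variable formulas, characterized
semantically (by soundness and completeness of Kripke semantics): `φ` and `ψ`
are equivalent iff they are forced at the same nodes in every Kripke model. -/
def IEquiv (φ ψ : PropForm Unit) : Prop :=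
  ∀ (W : Type) [Preorder W] (val : W → Unit → Prop), MonoVal val →
    ∀ w : W, Force val w φ ↔ Force val w ψ

/-- The Rieger–Nishimura formulas: `RN i = (φ_{i+1}, ψ_{i+1})` where
`φ₁ = ¬x`, `ψ₁ = x`, `φ_{i+1} = φ_i → ψ_i`, `ψ_{i+1} = φ_i ∨ ψ_i`. -/
def RN : ℕ → PropForm Unit × PropForm Unit
  | 0 => ((PropForm.var ()).impl .bot, PropForm.var ())
  | i + 1 => ((RN i).1.impl (RN i).2, (RN i).1.disj (RN i).2)

/-- An enumeration of `⊥`, `⊤`, and the Rieger–Nishimura formulas `φ_i, ψ_i`. -/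
def RNenum : ℕ → PropForm Unit
  | 0 => PropForm.bot
  | 1 => PropForm.bot.impl PropForm.bot
  | k + 2 => if k % 2 = 0 then (RN (k / 2)).1 else (RN (k / 2)).2

namespace RNAux

theorem force_mono {W α : Type} [Preorder W] {val : W → α → Prop} (hv : MonoVal val) :
    ∀ (p : PropForm α) {w w' : W}, w ≤ w' → Force val w p → Force val w' p
  | .var a, w, w', h, hf => hv a w w' h hf
  | .bot, _, _, _, hf => hf.elim
  | .conj p q, _, _, h, hf => ⟨force_mono hv p h hf.1, force_mono hv q h hf.2⟩
  | .disj p q, _, _, h, hf =>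
      hf.elim (fun x => Or.inl (force_mono hv p h x)) (fun x => Or.inr (force_mono hv q h x))
  | .impl _ _, _, _, h, hf => fun w'' h' hp => hf w'' (le_trans h h') hp

/-- semantic entailment -/
def ILe (a b : PropForm Unit) : Prop :=
  ∀ (W : Type) [Preorder W] (val : W → Unit → Prop), MonoVal val →
    ∀ w : W, Force val w a → Force val w b

theorem iequiv_of (h1 : ILe a b) (h2 : ILe b a) : IEquiv a b :=
  fun W _ val hv w => ⟨h1 W val hv w, h2 W val hv w⟩

theorem _root_.IEquiv.le1 (h : IEquiv a b) : ILe a b := fun W _ val hv w => (h W val hv w).1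
theorem _root_.IEquiv.le2 (h : IEquiv a b) : ILe b a := fun W _ val hv w => (h W val hv w).2

theorem ILe.refl (a : PropForm Unit) : ILe a a := fun _ _ _ _ _ h => h
theorem ILe.trans (h1 : ILe a b) (h2 : ILe b c) : ILe a c :=
  fun W _ val hv w hf => h2 W val hv w (h1 W val hv w hf)

theorem _root_.IEquiv.refl (a : PropForm Unit) : IEquiv a a := fun _ _ _ _ _ => Iff.rfl
theorem _root_.IEquiv.symm (h : IEquiv a b) : IEquiv b a := fun W _ val hv w => (h W val hv w).symm
theorem _root_.IEquiv.trans (h1 : IEquiv a b) (h2 : IEquiv b c) : IEquiv a c :=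
  fun W _ val hv w => (h1 W val hv w).trans (h2 W val hv w)

/-- codes for the RN elements -/
inductive Code : Type
  | bot | top
  | phi (n : ℕ)
  | psi (n : ℕ)
deriving DecidableEq

def interp : Code → PropForm Unit
  | .bot => .bot
  | .top => PropForm.bot.impl .bot
  | .phi n => (RN n).1
  | .psi n => (RN n).2

def idx : Code → ℕ
  | .bot => 0
  | .top => 1
  | .phi n => 2*n + 2
  | .psi n => 2*n + 3

theorem RNenum_idx (c : Code) : RNenum (idx c) = interp c := by
  cases c with
  | bot => rfl
  | top => rfl
  | phi n => show RNenum (2*n+2) = _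
             have : 2*n+2 = (2*n) + 2 := rfl
             simp [RNenum, Nat.mul_div_cancel_left, interp, Nat.mul_mod_right]
  | psi n => show RNenum (2*n+3) = _
             have h : 2*n+3 = (2*n+1) + 2 := rfl
             rw [h]
             simp [RNenum, interp, Nat.add_mul_mod_self_left]
             rw [Nat.add_comm, Nat.add_mul_div_left _ _ (by norm_num : 0 < 2)]
             simp

def cle : Code → Code → Bool
  | .bot, _ => true
  | _, .top => true
  | .top, _ => false
  | _, .bot => false
  | .psi n, .psi m => n ≤ m
  | .phi n, .psi m => n + 1 ≤ m
  | .psi n, .phi m => n + 1 ≤ m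
  | .phi n, .phi m => n = m || n + 2 ≤ m

end RNAux
namespace RNAux

theorem interp_phi_succ (n : ℕ) :
    interp (.phi (n+1)) = (interp (.phi n)).impl (interp (.psi n)) := rfl
theorem interp_psi_succ (n : ℕ) :
    interp (.psi (n+1)) = (interp (.phi n)).disj (interp (.psi n)) := rfl

theorem bot_ile (a : PropForm Unit) : ILe .bot a := fun _ _ _ _ _ h => h.elim
theorem ile_top (a : PropForm Unit) : ILe a (interp .top) := fun _ _ _ _ _ _ _ _ h => h

theorem psi_le_succ (n : ℕ) : ILe (interp (.psi n)) (interp (.psi (n+1))) :=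
  fun _ _ _ _ _ h => Or.inr h

theorem phi_le_psi_succ (n : ℕ) : ILe (interp (.phi n)) (interp (.psi (n+1))) :=
  fun _ _ _ _ _ h => Or.inl h

theorem psi_le_phi_succ (n : ℕ) : ILe (interp (.psi n)) (interp (.phi (n+1))) :=
  fun _ _ _ hv _ h _ hw _ => force_mono hv _ hw h

theorem psi_mono {n m : ℕ} (h : n ≤ m) : ILe (interp (.psi n)) (interp (.psi m)) := by
  induction m with
  | zero => cases Nat.le_zero.mp h; exact ILe.refl _
  | succ m ih =>
      rcases Nat.lt_or_ge n (m+1) with h' | h'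
      · exact (ih (Nat.lt_succ_iff.mp h')).trans (psi_le_succ m)
      · have : n = m + 1 := le_antisymm h h'
        subst this; exact ILe.refl _

theorem phi_le_psi {n m : ℕ} (h : n + 1 ≤ m) : ILe (interp (.phi n)) (interp (.psi m)) := by
  rcases Nat.exists_eq_add_of_le h with ⟨k, rfl⟩
  exact (phi_le_psi_succ n).trans (psi_mono (by omega))

theorem psi_le_phi {n m : ℕ} (h : n + 1 ≤ m) : ILe (interp (.psi n)) (interp (.phi m)) := by
  rcases Nat.exists_eq_add_of_le h with ⟨k, rfl⟩
  have heq : n + 1 + k = (n + k) + 1 := by omega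
  rw [heq]
  exact (psi_mono (by omega)).trans (psi_le_phi_succ (n + k))

theorem phi_le_phi {n m : ℕ} (h : n + 2 ≤ m) : ILe (interp (.phi n)) (interp (.phi m)) := by
  obtain ⟨m', rfl⟩ : ∃ m', m = m' + 1 := ⟨m - 1, by omega⟩
  exact (phi_le_psi (by omega)).trans (psi_le_phi_succ m')

theorem cle_sound {a b : Code} (h : cle a b = true) : ILe (interp a) (interp b) := by
  match a, b with
  | .bot, _ => exact bot_ile _
  | .top, .top | .phi _, .top | .psi _, .top => exact ile_top _
  | .top, .bot | .top, .phi _ | .top, .psi _ => simp [cle] at h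
  | .phi _, .bot | .psi _, .bot => simp [cle] at h
  | .psi n, .psi m => simp [cle] at h; exact psi_mono h
  | .phi n, .psi m => simp [cle] at h; exact phi_le_psi h
  | .psi n, .phi m => simp [cle] at h; exact psi_le_phi h
  | .phi n, .phi m =>
      simp [cle] at h
      rcases h with rfl | h
      · exact ILe.refl _
      · exact phi_le_phi h

end RNAux
namespace RNAux

variable {a b c : PropForm Unit}

theorem conj_le_left : ILe (a.conj b) a := fun _ _ _ _ _ h => h.1
theorem conj_le_right : ILe (a.conj b) b := fun _ _ _ _ _ h => h.2
theorem ile_conj (h1 : ILe c a) (h2 : ILe c b) : ILe c (a.conj b) :=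
  fun W _ val hv w h => ⟨h1 W val hv w h, h2 W val hv w h⟩
theorem conj_comm_equiv : IEquiv (a.conj b) (b.conj a) :=
  iequiv_of (fun _ _ _ _ _ h => ⟨h.2, h.1⟩) (fun _ _ _ _ _ h => ⟨h.2, h.1⟩)
theorem ile_disj_left : ILe a (a.disj b) := fun _ _ _ _ _ h => Or.inl h
theorem ile_disj_right : ILe b (a.disj b) := fun _ _ _ _ _ h => Or.inr h
theorem disj_ile (h1 : ILe a c) (h2 : ILe b c) : ILe (a.disj b) c :=
  fun W _ val hv w h => h.elim (h1 W val hv w) (h2 W val hv w)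
theorem disj_comm_equiv : IEquiv (a.disj b) (b.disj a) :=
  iequiv_of (fun _ _ _ _ _ h => h.symm) (fun _ _ _ _ _ h => h.symm)

theorem M0 : IEquiv ((interp (.phi 0)).conj (interp (.psi 0))) .bot :=
  iequiv_of (fun _ _ _ _ w h => h.1 w le_rfl h.2) (bot_ile _)

theorem M0' : IEquiv ((interp (.phi 0)).conj (interp (.phi 1))) .bot :=
  iequiv_of (fun _ _ _ _ w h => h.1 w le_rfl (h.2 w le_rfl h.1)) (bot_ile _)

/-- `φ_{n+2} ∧ ψ_{n+2} ≡ ψ_{n+1}` and `φ_{n+2} ∧ φ_{n+3} ≡ ψ_{n+1}` (code indices). -/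
theorem Mboth (n : ℕ) :
    IEquiv ((interp (.phi (n+1))).conj (interp (.psi (n+1)))) (interp (.psi n)) ∧
    IEquiv ((interp (.phi (n+1))).conj (interp (.phi (n+2)))) (interp (.psi n)) := by
  induction n with
  | zero =>
    have hpsi : IEquiv ((interp (.phi 1)).conj (interp (.psi 1))) (interp (.psi 0)) := by
      refine iequiv_of ?_ (ile_conj (psi_le_phi_succ 0) (psi_le_succ 0))
      intro W _ val hv w h
      rcases h.2 with h0 | h0
      · exact ((M0' W val hv w).1 ⟨h0, h.1⟩).elim
      · exact h0
    refine ⟨hpsi, ?_⟩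
    refine iequiv_of ?_ (ile_conj (psi_le_phi_succ 0) (psi_le_phi (by omega)))
    intro W _ val hv w h
    exact (hpsi W val hv w).1 ⟨h.1, h.2 w le_rfl h.1⟩
  | succ n ih =>
    have hpsi : IEquiv ((interp (.phi (n+2))).conj (interp (.psi (n+2)))) (interp (.psi (n+1))) := by
      refine iequiv_of ?_ (ile_conj (psi_le_phi_succ (n+1)) (psi_le_succ (n+1)))
      intro W _ val hv w h
      rcases h.2 with h0 | h0
      · exact psi_le_succ n W val hv w ((ih.2 W val hv w).1 ⟨h0, h.1⟩)
      · exact h0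
    refine ⟨hpsi, ?_⟩
    refine iequiv_of ?_ (ile_conj (psi_le_phi_succ (n+1)) (psi_le_phi (by omega)))
    intro W _ val hv w h
    exact (hpsi W val hv w).1 ⟨h.1, h.2 w le_rfl h.1⟩

def cmeet0 : Code → Code → Code
  | .phi n, .psi _ => if n = 0 then .bot else .psi (n-1)
  | .psi _, .phi n => if n = 0 then .bot else .psi (n-1)
  | .phi n, .phi m => if n = 0 ∨ m = 0 then .bot else .psi (min n m - 1)
  | _, _ => .bot

def cmeet (a b : Code) : Code :=
  if cle a b then a else if cle b a then b else cmeet0 a b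

def cjoin0 : Code → Code → Code
  | .phi n, .psi _ => .psi (n+1)
  | .psi _, .phi n => .psi (n+1)
  | .phi n, .phi m => .psi (max n m + 1)
  | _, _ => .top

def cjoin (a b : Code) : Code :=
  if cle a b then b else if cle b a then a else cjoin0 a b

theorem cmeet_sound (a b : Code) :
    IEquiv ((interp a).conj (interp b)) (interp (cmeet a b)) := by
  by_cases h1 : cle a b
  · rw [cmeet, if_pos h1]
    exact iequiv_of conj_le_left (ile_conj (ILe.refl _) (cle_sound h1))
  · by_cases h2 : cle b a
    · rw [cmeet, if_neg h1, if_pos h2]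
      exact iequiv_of conj_le_right (ile_conj (cle_sound h2) (ILe.refl _))
    · rw [cmeet, if_neg h1, if_neg h2]
      match a, b with
      | .bot, b => simp [cle] at h1
      | .top, b => cases b <;> simp [cle] at h1 h2
      | .phi _, .bot => simp [cle] at h2
      | .psi _, .bot => simp [cle] at h2
      | .phi _, .top => simp [cle] at h1
      | .psi _, .top => simp [cle] at h1
      | .psi n, .psi m => simp [cle] at h1 h2; omega
      | .phi n, .psi m =>
        have hnm : n = m := by simp [cle] at h1 h2; omega
        subst hnm
        match n with
        | 0 => simpa [cmeet0, interp] using M0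
        | k+1 => simpa [cmeet0] using (Mboth k).1
      | .psi m, .phi n =>
        have hnm : n = m := by simp [cle] at h1 h2; omega
        subst hnm
        match n with
        | 0 => simpa [cmeet0, interp] using (IEquiv.trans conj_comm_equiv M0)
        | k+1 => simpa [cmeet0] using (IEquiv.trans conj_comm_equiv (Mboth k).1)
      | .phi n, .phi m =>
        have hc : m = n + 1 ∨ n = m + 1 := by simp [cle] at h1 h2; omega
        rcases hc with rfl | rfl
        · match n with
          | 0 => simpa [cmeet0, interp] using M0'
          | k+1 => simpa [cmeet0, Nat.min_def] using (Mboth k).2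
        · match m with
          | 0 => simpa [cmeet0, interp] using (IEquiv.trans conj_comm_equiv M0')
          | k+1 => simpa [cmeet0, Nat.min_def] using (IEquiv.trans conj_comm_equiv (Mboth k).2)

theorem Jphi (n : ℕ) :
    IEquiv ((interp (.phi n)).disj (interp (.phi (n+1)))) (interp (.psi (n+2))) := by
  refine iequiv_of (disj_ile (phi_le_psi (by omega)) (phi_le_psi (by omega))) ?_
  intro W _ val hv w h
  rcases h with h | h
  · exact Or.inr h
  · rcases h with h | h
    · exact Or.inl h
    · exact Or.inr (psi_le_phi_succ n W val hv w h)

theorem cjoin_sound (a b : Code) :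
    IEquiv ((interp a).disj (interp b)) (interp (cjoin a b)) := by
  by_cases h1 : cle a b
  · rw [cjoin, if_pos h1]
    exact iequiv_of (disj_ile (cle_sound h1) (ILe.refl _)) ile_disj_right
  · by_cases h2 : cle b a
    · rw [cjoin, if_neg h1, if_pos h2]
      exact iequiv_of (disj_ile (ILe.refl _) (cle_sound h2)) ile_disj_left
    · rw [cjoin, if_neg h1, if_neg h2]
      match a, b with
      | .bot, b => simp [cle] at h1
      | .top, b => cases b <;> simp [cle] at h1 h2
      | .phi _, .bot => simp [cle] at h2
      | .psi _, .bot => simp [cle] at h2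
      | .phi _, .top => simp [cle] at h1
      | .psi _, .top => simp [cle] at h1
      | .psi n, .psi m => simp [cle] at h1 h2; omega
      | .phi n, .psi m =>
        have hnm : n = m := by simp [cle] at h1 h2; omega
        subst hnm
        exact IEquiv.refl _
      | .psi m, .phi n =>
        have hnm : n = m := by simp [cle] at h1 h2; omega
        subst hnm
        exact disj_comm_equiv
      | .phi n, .phi m =>
        have hc : m = n + 1 ∨ n = m + 1 := by simp [cle] at h1 h2; omega
        rcases hc with rfl | rfl
        · simpa [cjoin0, Nat.max_def] using Jphi n
        · simpa [cjoin0, Nat.max_def] using (IEquiv.trans disj_comm_equiv (Jphi m))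

end RNAux
namespace RNAux

variable {a b c a' b' : PropForm Unit}

theorem impl_top_of_ile (h : ILe a b) : IEquiv (a.impl b) (interp .top) :=
  iequiv_of (ile_top _)
    (fun W _ val hv w _ => fun w' _ ha => h W val hv w' ha)

theorem top_impl : IEquiv ((interp .top).impl b) b :=
  iequiv_of
    (fun _ _ _ _ w h => h w le_rfl (fun _ _ hb => hb))
    (fun _ _ _ hv _ hb w' hw _ => force_mono hv b hw hb)

theorem disj_impl : IEquiv ((a.disj b).impl c) ((a.impl c).conj (b.impl c)) :=
  iequiv_of
    (fun _ _ _ _ _ h => ⟨fun w' hw ha => h w' hw (Or.inl ha),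
                         fun w' hw hb => h w' hw (Or.inr hb)⟩)
    (fun _ _ _ _ _ h w' hw hab => hab.elim (h.1 w' hw) (h.2 w' hw))

theorem impl_conj_self : IEquiv (a.impl b) (a.impl (a.conj b)) :=
  iequiv_of
    (fun _ _ _ _ _ h w' hw ha => ⟨ha, h w' hw ha⟩)
    (fun _ _ _ _ _ h w' hw ha => (h w' hw ha).2)

theorem impl_split (hcb : ILe c b) (hba : ILe b a) :
    IEquiv (a.impl c) ((a.impl b).conj (b.impl c)) :=
  iequiv_of
    (fun W _ val hv w h => ⟨fun w' hw ha => hcb W val hv w' (h w' hw ha),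
                            fun w' hw hb => h w' hw (hba W val hv w' hb)⟩)
    (fun _ _ _ _ _ h w' hw ha => h.2 w' hw (h.1 w' hw ha))

theorem impl_congr (h1 : IEquiv a a') (h2 : IEquiv b b') : IEquiv (a.impl b) (a'.impl b') :=
  iequiv_of
    (fun W _ val hv _ h w' hw ha => (h2 W val hv w').1 (h w' hw ((h1 W val hv w').2 ha)))
    (fun W _ val hv _ h w' hw ha => (h2 W val hv w').2 (h w' hw ((h1 W val hv w').1 ha)))

theorem conj_congr (h1 : IEquiv a a') (h2 : IEquiv b b') : IEquiv (a.conj b) (a'.conj b') :=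
  iequiv_of
    (fun W _ val hv w h => ⟨(h1 W val hv w).1 h.1, (h2 W val hv w).1 h.2⟩)
    (fun W _ val hv w h => ⟨(h1 W val hv w).2 h.1, (h2 W val hv w).2 h.2⟩)

theorem impl_mono_right (h : ILe b c) : ILe (a.impl b) (a.impl c) :=
  fun W _ val hv _ hf w' hw ha => h W val hv w' (hf w' hw ha)

/-- `φ_{k+2} → ψ_{k+1} ≡ φ_{k+3}` (real indices). -/
theorem I6 (k : ℕ) :
    IEquiv ((interp (.phi (k+1))).impl (interp (.psi k))) (interp (.phi (k+2))) :=
  iequiv_of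
    (impl_mono_right (psi_le_succ k))
    (fun _ _ _ _ _ h w' hw hA => (h w' hw hA).elim (fun hp => hA w' le_rfl hp) id)

theorem I60 : IEquiv ((interp (.phi 0)).impl .bot) (interp (.phi 1)) :=
  iequiv_of
    (impl_mono_right (bot_ile _))
    (fun _ _ _ _ _ h w' hw hA => (hA w' le_rfl (h w' hw hA)).elim)

theorem cmeet_psi0 {b : Code} (h : ¬ cle (.psi 0) b = true) : cmeet (.psi 0) b = .bot := by
  match b with
  | .bot => decide
  | .top => exact absurd rfl h
  | .psi m => exact absurd (by simp [cle]) h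
  | .phi m =>
    have hm : m = 0 := by simp [cle] at h; omega
    subst hm; decide

theorem cmeet_phi0 {b : Code} (h : ¬ cle (.phi 0) b = true) : cmeet (.phi 0) b = .bot := by
  match b with
  | .bot => decide
  | .top => exact absurd rfl h
  | .psi m =>
    have hm : m = 0 := by simp [cle] at h; omega
    subst hm; decide
  | .phi m =>
    have hm : m = 1 := by simp [cle] at h; omega
    subst hm; decide

theorem cmeet_phi_lt {k : ℕ} {b : Code} (h : ¬ cle (.phi (k+1)) b = true) :
    cle (cmeet (.phi (k+1)) b) (.psi k) = true := by
  match b with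
  | .bot => simp [cmeet, cle]
  | .top => exact absurd rfl h
  | .psi m =>
    simp only [cmeet, cmeet0]
    rw [if_neg h]
    by_cases h2 : cle (.psi m) (.phi (k+1)) = true
    · rw [if_pos h2]; simp [cle] at h2 ⊢; omega
    · rw [if_neg h2]
      simp [cle] at h h2 ⊢
      try omega
  | .phi m =>
    simp only [cmeet, cmeet0]
    rw [if_neg h]
    by_cases h2 : cle (.phi m) (.phi (k+1)) = true
    · rw [if_pos h2]; simp [cle] at h h2 ⊢; omega
    · rw [if_neg h2]
      rcases Nat.eq_zero_or_pos m with rfl | hm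
      · simp [cle]
      · rw [if_neg (by omega)]
        simp [cle]
        try omega

def rank : Code → ℕ
  | .bot => 0 | .top => 0 | .phi n => n + 1 | .psi n => n + 1

def cimpAux : ℕ → Code → Code → Code
  | _, .bot, _ => .top
  | _, .top, b => b
  | _, .psi 0, b => if cle (.psi 0) b then .top else .phi 0
  | f+1, .psi (n+1), b =>
      if cle (.psi (n+1)) b then .top
      else cmeet (cimpAux f (.phi n) b) (cimpAux f (.psi n) b)
  | f+1, .phi n, b =>
      if cle (.phi n) b then .top
      else if n = 0 then .phi 1
      else cmeet (.phi (n+1)) (cimpAux f (.psi (n-1)) (cmeet (.phi n) b))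
  | 0, _, _ => .top

def cimp (a b : Code) : Code := cimpAux (rank a) a b

theorem cimpAux_sound : ∀ (f : ℕ) (a b : Code), rank a ≤ f →
    IEquiv ((interp a).impl (interp b)) (interp (cimpAux f a b)) := by
  intro f
  induction f with
  | zero =>
    intro a b hr
    match a with
    | .bot => exact impl_top_of_ile (bot_ile _)
    | .top => exact top_impl
    | .phi n => simp [rank] at hr
    | .psi n => simp [rank] at hr
  | succ f ih =>
    intro a b hr
    match a with
    | .bot => exact impl_top_of_ile (bot_ile _)
    | .top => exact top_impl
    | .psi 0 =>
      show IEquiv _ (interp (if cle (.psi 0) b then .top else .phi 0))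
      by_cases hc : cle (.psi 0) b
      · rw [if_pos hc]; exact impl_top_of_ile (cle_sound hc)
      · rw [if_neg hc]
        have h1 := (impl_conj_self (a := interp (.psi 0)) (b := interp b)).trans
          (impl_congr (IEquiv.refl _) (cmeet_sound (.psi 0) b))
        rw [cmeet_psi0 hc] at h1
        exact h1
    | .psi (n+1) =>
      show IEquiv _ (interp (if cle (.psi (n+1)) b then .top
          else cmeet (cimpAux f (.phi n) b) (cimpAux f (.psi n) b)))
      by_cases hc : cle (.psi (n+1)) b
      · rw [if_pos hc]; exact impl_top_of_ile (cle_sound hc)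
      · rw [if_neg hc]
        have hf : rank (Code.phi n) ≤ f := by simp [rank] at hr ⊢; omega
        have hf' : rank (Code.psi n) ≤ f := by simp [rank] at hr ⊢; omega
        have e1 : IEquiv ((interp (.psi (n+1))).impl (interp b))
            (((interp (.phi n)).impl (interp b)).conj ((interp (.psi n)).impl (interp b))) :=
          disj_impl
        exact e1.trans ((conj_congr (ih _ b hf) (ih _ b hf')).trans
          (cmeet_sound (cimpAux f (.phi n) b) (cimpAux f (.psi n) b)))
    | .phi 0 =>
      show IEquiv _ (interp (if cle (.phi 0) b then .top else .phi 1))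
      by_cases hc : cle (.phi 0) b
      · rw [if_pos hc]; exact impl_top_of_ile (cle_sound hc)
      · rw [if_neg hc]
        have h1 := (impl_conj_self (a := interp (.phi 0)) (b := interp b)).trans
          (impl_congr (IEquiv.refl _) (cmeet_sound (.phi 0) b))
        rw [cmeet_phi0 hc] at h1
        exact h1.trans I60
    | .phi (k+1) =>
      show IEquiv _ (interp (if cle (.phi (k+1)) b then .top
          else if k+1 = 0 then .phi 1
          else cmeet (.phi (k+2)) (cimpAux f (.psi (k+1-1)) (cmeet (.phi (k+1)) b))))
      by_cases hc : cle (.phi (k+1)) b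
      · rw [if_pos hc]; exact impl_top_of_ile (cle_sound hc)
      · rw [if_neg hc, if_neg (by omega : ¬ (k+1 = 0))]
        have hf : rank (Code.psi k) ≤ f := by simp [rank] at hr ⊢; omega
        set c := cmeet (.phi (k+1)) b with hcdef
        have hcle : cle c (.psi k) := cmeet_phi_lt hc
        have e1 : IEquiv ((interp (.phi (k+1))).impl (interp b))
            ((interp (.phi (k+1))).impl (interp c)) :=
          impl_conj_self.trans (impl_congr (IEquiv.refl _) (cmeet_sound _ b))
        have e2 : IEquiv ((interp (.phi (k+1))).impl (interp c))
            (((interp (.phi (k+1))).impl (interp (.psi k))).conj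
              ((interp (.psi k)).impl (interp c))) :=
          impl_split (cle_sound hcle) (psi_le_phi_succ k)
        have e3 := conj_congr (I6 k) (ih (Code.psi k) c hf)
        have e4 := cmeet_sound (Code.phi (k+2)) (cimpAux f (.psi k) c)
        simpa using (e1.trans (e2.trans (e3.trans e4)))

theorem cimp_sound (a b : Code) :
    IEquiv ((interp a).impl (interp b)) (interp (cimp a b)) :=
  cimpAux_sound (rank a) a b le_rfl

end RNAux
namespace RNAux

theorem disj_congr {a b a' b' : PropForm Unit} (h1 : IEquiv a a') (h2 : IEquiv b b') :
    IEquiv (a.disj b) (a'.disj b') :=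
  iequiv_of
    (fun W _ val hv w h => h.elim (fun x => Or.inl ((h1 W val hv w).1 x))
      (fun x => Or.inr ((h2 W val hv w).1 x)))
    (fun W _ val hv w h => h.elim (fun x => Or.inl ((h1 W val hv w).2 x))
      (fun x => Or.inr ((h2 W val hv w).2 x)))

theorem exists_code (χ : PropForm Unit) : ∃ c : Code, IEquiv χ (interp c) := by
  induction χ with
  | var a => exact ⟨.psi 0, by cases a; exact IEquiv.refl _⟩
  | bot => exact ⟨.bot, IEquiv.refl _⟩
  | conj p q ihp ihq =>
    obtain ⟨c1, h1⟩ := ihp; obtain ⟨c2, h2⟩ := ihq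
    exact ⟨cmeet c1 c2, (conj_congr h1 h2).trans (cmeet_sound c1 c2)⟩
  | disj p q ihp ihq =>
    obtain ⟨c1, h1⟩ := ihp; obtain ⟨c2, h2⟩ := ihq
    exact ⟨cjoin c1 c2, (disj_congr h1 h2).trans (cjoin_sound c1 c2)⟩
  | impl p q ihp ihq =>
    obtain ⟨c1, h1⟩ := ihp; obtain ⟨c2, h2⟩ := ihq
    exact ⟨cimp c1 c2, (impl_congr h1 h2).trans (cimp_sound c1 c2)⟩

/-! ### The Rieger–Nishimura ladder Kripke model, used for uniqueness -/

structure Ladder : Type where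
  n : ℕ

instance : Preorder Ladder where
  le a b := a.n = b.n ∨ b.n + 2 ≤ a.n
  le_refl a := Or.inl rfl
  le_trans a b c h1 h2 := by
    have h1' : a.n = b.n ∨ b.n + 2 ≤ a.n := h1
    have h2' : b.n = c.n ∨ c.n + 2 ≤ b.n := h2
    show a.n = c.n ∨ c.n + 2 ≤ a.n
    omega

theorem ladder_le_def {a b : Ladder} : a ≤ b ↔ (a.n = b.n ∨ b.n + 2 ≤ a.n) := Iff.rfl

def lval : Ladder → Unit → Prop := fun w _ => w.n = 0

theorem lmono : MonoVal lval := by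
  intro a w w' h hv
  rcases h with h | h <;> simp [lval] at * <;> omega

theorem ladder_force (n : ℕ) : ∀ w : Ladder,
    (Force lval w (RN n).1 ↔ (w.n = n+1 ∨ w.n < n)) ∧
    (Force lval w (RN n).2 ↔ w.n ≤ n) := by
  induction n with
  | zero =>
    intro w
    constructor
    · show (∀ w', w ≤ w' → Force lval w' (.var ()) → Force lval w' .bot) ↔ _
      constructor
      · intro h
        have h0 := h ⟨0⟩
        simp only [ladder_le_def, Force, lval] at h0
        by_contra hc
        exact h0 (by omega) trivial
      · intro h w' hw hx
        rcases hw with hw | hw <;> simp [Force, lval] at hx ⊢ <;> omega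
    · show lval w () ↔ _
      simp [lval]
  | succ n ih =>
    intro w
    constructor
    · show (∀ w', w ≤ w' → Force lval w' (RN n).1 → Force lval w' (RN n).2) ↔ _
      constructor
      · intro h
        by_contra hc
        push_neg at hc
        by_cases hw : w.n = n + 1
        · have := (ih w).2.mp (h w le_rfl ((ih w).1.mpr (Or.inl (by omega))))
          omega
        · have hle : w ≤ (⟨n+1⟩ : Ladder) := Or.inr (by simp; omega)
          have := (ih ⟨n+1⟩).2.mp (h ⟨n+1⟩ hle ((ih ⟨n+1⟩).1.mpr (Or.inl rfl)))
          simp at this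
      · intro h w' hw hf
        have h1 := (ih w').1.mp hf
        apply (ih w').2.mpr
        rcases hw with hw | hw <;> omega
    · show (Force lval w (RN n).1 ∨ Force lval w (RN n).2) ↔ _
      constructor
      · intro h
        rcases h with h | h
        · have := (ih w).1.mp h; omega
        · have := (ih w).2.mp h; omega
      · intro h
        rcases Nat.lt_or_ge w.n (n+1) with h' | h'
        · exact Or.inr ((ih w).2.mpr (by omega))
        · exact Or.inl ((ih w).1.mpr (by omega))

/-- forcing set of `RNenum k` in the ladder, as an arithmetic predicate -/
def S : ℕ → ℕ → Prop
  | 0 => fun _ => False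
  | 1 => fun _ => True
  | k+2 => if k % 2 = 0 then fun x => x = k/2 + 1 ∨ x < k/2 else fun x => x ≤ k/2

theorem force_enum (k : ℕ) (w : Ladder) : Force lval w (RNenum k) ↔ S k w.n := by
  match k with
  | 0 => exact Iff.rfl
  | 1 =>
    show (∀ w', w ≤ w' → Force lval w' .bot → Force lval w' .bot) ↔ True
    simp
  | k+2 =>
    show Force lval w (if k % 2 = 0 then (RN (k / 2)).1 else (RN (k / 2)).2) ↔ _
    by_cases hp : k % 2 = 0
    · rw [if_pos hp]
      simpa [S, hp] using (ladder_force (k/2) w).1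
    · rw [if_neg hp]
      simpa [S, hp] using (ladder_force (k/2) w).2

theorem S_inj {j k : ℕ} (h : ∀ x, S j x ↔ S k x) : j = k := by
  match j, k with
  | 0, 0 => rfl
  | 0, 1 => exact ((h 0).mpr trivial).elim
  | 1, 0 => exact ((h 0).mp trivial).elim
  | 1, 1 => rfl
  | 0, k+2 =>
    by_cases hp : k % 2 = 0
    · exact ((h (k/2+1)).mpr (by simp [S, hp])).elim
    · exact ((h 0).mpr (by simp [S, hp])).elim
  | k+2, 0 =>
    by_cases hp : k % 2 = 0
    · exact ((h (k/2+1)).mp (by simp [S, hp])).elim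
    · exact ((h 0).mp (by simp [S, hp])).elim
  | 1, k+2 =>
    by_cases hp : k % 2 = 0
    · have := (h (k/2)).mp trivial
      simp [S, hp] at this
    · have := (h (k/2+1)).mp trivial
      simp [S, hp] at this
  | k+2, 1 =>
    by_cases hp : k % 2 = 0
    · have := (h (k/2)).mpr trivial
      simp [S, hp] at this
    · have := (h (k/2+1)).mpr trivial
      simp [S, hp] at this
  | j+2, k+2 =>
    by_cases hp : j % 2 = 0 <;> by_cases hq : k % 2 = 0
    · have h1 := (h (j/2+1)).mp (by simp [S, hp])
      have h2 := (h (k/2+1)).mpr (by simp [S, hq])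
      simp [S, hp, hq] at h1 h2
      omega
    · have h1 := (h (j/2+1)).mp (by simp [S, hp])
      simp [S, hq] at h1
      have h2 := (h (j/2)).mpr (by simp [S, hq]; omega)
      simp [S, hp] at h2
    · have h1 := (h (k/2+1)).mpr (by simp [S, hq])
      simp [S, hp] at h1
      have h2 := (h (k/2)).mp (by simp [S, hp]; omega)
      simp [S, hq] at h2
    · have h1 := (h (j/2)).mp (by simp [S, hp])
      have h2 := (h (k/2)).mpr (by simp [S, hq])
      simp [S, hp, hq] at h1 h2
      omega

theorem enum_inj {j k : ℕ} (h : IEquiv (RNenum j) (RNenum k)) : j = k := by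
  apply S_inj
  intro x
  have := h Ladder lval lmono ⟨x⟩
  rwa [force_enum, force_enum] at this

end RNAux
open RNAux in
/-- Every propositional formula in the single variable `x` is intuitionistically
equivalent to exactly one formula among `⊥`, `⊤`, and the Rieger–Nishimura
formulas `φ_i`, `ψ_i`. -/
theorem stmt_8 (χ : PropForm Unit) : ∃! k : ℕ, IEquiv χ (RNenum k) := by
  obtain ⟨c, hc⟩ := exists_code χ
  refine ⟨idx c, ?_, ?_⟩
  · show IEquiv χ (RNenum (idx c))
    rw [RNenum_idx]; exact hc
  · intro k hk
    have h1 : IEquiv χ (RNenum (idx c)) := by rw [RNenum_idx]; exact hc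
    exact enum_inj (hk.symm.trans h1)
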